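/- Let R be an integral domain containing ℚ and let D be an R-derivation on the polynomial ring R[x,y]. If the divergence div(D) = ∂D(x)/∂x + ∂D(y)/∂y equals 0, then there exists a non-constant polynomial f ∈ R[x,y] \ R such that D(f) = 0. -/

import Mathlib

open MvPolynomial

/-- Formal antiderivative in the `i`-th variable (division by exponents uses `Algebra ℚ R`). -/
noncomputable def integ {R : Type*} [CommRing R] [Algebra ℚ R] {σ : Type*} [DecidableEq σ]
    (i : σ) : MvPolynomial σ R →ₗ[R] MvPolynomial σ R :=
  (Finsupp.lsum ℕ fun n =>
    { toFun := fun a => monomial (n + Finsupp.single i 1) (((n i : ℚ) + 1)⁻¹ • a)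
      map_add' := fun a b => by rw [smul_add, map_add]
      map_smul' := fun r a => by
        dsimp only [RingHom.id_apply]
        rw [smul_comm, map_smul] } : ((σ →₀ ℕ) →₀ R) →ₗ[R] MvPolynomial σ R) ∘ₗ (AddMonoidAlgebra.coeffLinearEquiv R).toLinearMap

lemma integ_monomial {R : Type*} [CommRing R] [Algebra ℚ R] {σ : Type*} [DecidableEq σ]
    (i : σ) (n : σ →₀ ℕ) (a : R) :
    integ i (monomial n a) = monomial (n + Finsupp.single i 1) (((n i : ℚ) + 1)⁻¹ • a) := by
  rw [← single_eq_monomial]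
  exact Finsupp.sum_single_index (by simp)

lemma pderiv_integ_self {R : Type*} [CommRing R] [Algebra ℚ R] {σ : Type*} [DecidableEq σ]
    (i : σ) (g : MvPolynomial σ R) : pderiv i (integ i g) = g := by
  induction g using MvPolynomial.induction_on' with
  | add p q hp hq => rw [map_add, map_add, hp, hq]
  | monomial n a =>
    rw [integ_monomial, pderiv_monomial]
    have h1 : n + Finsupp.single i 1 - Finsupp.single i 1 = n := by
      ext b; simp
    have h0 : (n + Finsupp.single i 1 : σ →₀ ℕ) i = n i + 1 := by simp
    rw [h1, h0]
    congr 1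
    have hc : ((n i + 1 : ℕ) : R) = algebraMap ℚ R ((n i : ℚ) + 1) := by
      push_cast; simp
    rw [hc, mul_comm, ← Algebra.smul_def, smul_smul, mul_inv_cancel₀, one_smul]
    positivity

lemma pderiv_integ_of_ne {R : Type*} [CommRing R] [Algebra ℚ R] {σ : Type*} [DecidableEq σ]
    {i j : σ} (h : j ≠ i) (g : MvPolynomial σ R) :
    pderiv j (integ i g) = integ i (pderiv j g) := by
  induction g using MvPolynomial.induction_on' with
  | add p q hp hq => simp [map_add, hp, hq]
  | monomial n a =>
    rw [integ_monomial, pderiv_monomial, pderiv_monomial, integ_monomial]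
    have e1 : (n + Finsupp.single i 1 : σ →₀ ℕ) j = n j := by
      simp [Finsupp.single_eq_of_ne h]
    have e2 : (n - Finsupp.single j 1 : σ →₀ ℕ) i = n i := by
      simp [Finsupp.tsub_apply, Finsupp.single_eq_of_ne (Ne.symm h)]
    have e3 : n + Finsupp.single i 1 - Finsupp.single j 1
        = n - Finsupp.single j 1 + Finsupp.single i 1 := by
      ext b
      simp only [Finsupp.add_apply, Finsupp.tsub_apply, Finsupp.single_apply]
      by_cases h1 : i = b <;> by_cases h2 : j = b <;> simp_all
    rw [e1, e2, e3, smul_mul_assoc]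

theorem exists_nonconstant_in_kernel_of_divergence_eq_zero
    (R : Type*) [CommRing R] [IsDomain R] [Algebra ℚ R]
    (D : Derivation R (MvPolynomial (Fin 2) R) (MvPolynomial (Fin 2) R))
    (hdiv : pderiv 0 (D (X 0)) + pderiv 1 (D (X 1)) = 0) :
    ∃ f : MvPolynomial (Fin 2) R, (∀ r : R, f ≠ C r) ∧ D f = 0 := by
  classical
  set p := D (X 0) with hp
  set q := D (X 1) with hq
  have key : ∀ g, D g = p * pderiv 0 g + q * pderiv 1 g := by
    have hD : D = p • (pderiv 0 : Derivation R (MvPolynomial (Fin 2) R) _) + q • pderiv 1 := by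
      apply derivation_ext
      intro i
      fin_cases i <;>
        simp [Derivation.smul_apply, pderiv_X_self, pderiv_X_of_ne, ← hp, ← hq,
          show (0 : Fin 2) ≠ 1 by decide, show (1 : Fin 2) ≠ 0 by decide]
    intro g
    rw [hD]
    simp [Derivation.add_apply, Derivation.smul_apply, smul_eq_mul]
  by_cases hpq : p = 0 ∧ q = 0
  · refine ⟨X 0, ?_, ?_⟩
    · intro r hr
      have hco := congrArg (coeff (Finsupp.single 0 1)) hr
      rw [coeff_X, coeff_C, if_pos rfl, if_neg (by simp [eq_comm, Finsupp.single_eq_zero])] at hco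
      exact one_ne_zero hco
    · rw [key]; simp [hpq.1, hpq.2]
  · set f : MvPolynomial (Fin 2) R :=
      integ 1 (-p) + integ 0 (q - integ 1 (pderiv 1 q)) with hf
    have h10 : (1 : Fin 2) ≠ 0 := by decide
    have h01 : (0 : Fin 2) ≠ 1 := by decide
    have hd1 : pderiv 1 f = -p := by
      rw [hf, map_add, pderiv_integ_self, pderiv_integ_of_ne h10, map_sub,
        pderiv_integ_self, sub_self, map_zero, add_zero]
    have hd0 : pderiv 0 f = q := by
      rw [hf, map_add, pderiv_integ_of_ne h01, pderiv_integ_self, map_neg]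
      have hdp : pderiv 0 p = -(pderiv 1 q) := eq_neg_of_add_eq_zero_left hdiv
      rw [hdp, neg_neg]
      abel
    refine ⟨f, ?_, ?_⟩
    · intro r hr
      apply hpq
      constructor
      · have h1 := hd1
        rw [hr, pderiv_C] at h1
        exact neg_eq_zero.mp h1.symm
      · have h0 := hd0
        rw [hr, pderiv_C] at h0
        exact h0.symm
    · rw [key, hd0, hd1]; ring
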